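/- arXiv:2605.12932 — 2 statements merged into one kernel-verified Lean document; each statement's English description precedes it below -/
import Mathlib

section
/- Let f(X) = Σ_{i=1}^M tr((X J_i)^H A_i (X J_i)) and ℋ(X) = Σ_{i=1}^M 2·A_i·X·J_i·J_i^T as in the context, with n ≥ k. Let X ∈ ℂ^{n×k} be orthonormal and let X' ∈ ℂ^{n×k} be an orthonormal polar factor of ℋ(X), i.e., X' is orthonormal and ℋ(X) = X'Λ with Λ Hermitian positive semidefinite. Then f(X') ≥ f(X) + η, where η := ‖ℋ(X)‖_tr − Re tr(X^H ℋ(X)); moreover η ≥ 0, and η = 0 if and only if ℋ(X) = X·(X^H ℋ(X)) with X^H ℋ(X) Hermitian positive semidefinite (i.e., ℋ(X) = X·(X^H ℋ(X)) is already a polar decomposition). -/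
open Matrix
open scoped ComplexOrder

/-- The trace norm (nuclear norm) of a complex matrix: the sum of all its singular values,
computed as the sum of the square roots of the eigenvalues of `Hᴴ * H`. -/
noncomputable def traceNorm {α β : Type*} [Fintype α] [Fintype β] [DecidableEq β]
    (H : Matrix α β ℂ) : ℝ :=
  ∑ i, Real.sqrt ((Matrix.posSemidef_conjTranspose_mul_self H).1.eigenvalues i)


open scoped MatrixOrder in
noncomputable def Matrix.PosSemidef.sqrt {m : Type*} [Fintype m] [DecidableEq m] {M : Matrix m m ℂ}
    (_hM : M.PosSemidef) : Matrix m m ℂ := CFC.sqrt M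

open scoped MatrixOrder in
lemma Matrix.PosSemidef.posSemidef_sqrt {m : Type*} [Fintype m] [DecidableEq m] {M : Matrix m m ℂ}
    (hM : M.PosSemidef) : hM.sqrt.PosSemidef := (CFC.sqrt_nonneg M).posSemidef

open scoped MatrixOrder in
lemma Matrix.PosSemidef.sqrt_mul_self {m : Type*} [Fintype m] [DecidableEq m] {M : Matrix m m ℂ}
    (hM : M.PosSemidef) : hM.sqrt * hM.sqrt = M := CFC.sqrt_mul_sqrt_self M hM.nonneg

open scoped MatrixOrder in
lemma Matrix.PosSemidef.eq_sqrt_of_sq_eq {m : Type*} [Fintype m] [DecidableEq m] {M L : Matrix m m ℂ}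
    (hL : L.PosSemidef) (hM : M.PosSemidef) (h : L ^ 2 = M) : L = hM.sqrt := by
  unfold Matrix.PosSemidef.sqrt
  rw [eq_comm, CFC.sqrt_eq_iff M L hM.nonneg hL.nonneg, ← sq, h]

open scoped MatrixOrder in
lemma trace_sqrt {m : Type*} [Fintype m] [DecidableEq m] {M : Matrix m m ℂ}
    (hM : M.PosSemidef) :
    (Matrix.trace hM.sqrt).re = ∑ i, Real.sqrt (hM.1.eigenvalues i) := by
  rw [Matrix.PosSemidef.sqrt, CFC.sqrt_eq_cfc, cfc_nnreal_eq_real _ M, hM.1.cfc_eq,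
    IsHermitian.cfc, Unitary.conjStarAlgAut_apply, Matrix.trace_mul_comm, ← Matrix.mul_assoc]
  have h1 : star (hM.1.eigenvectorUnitary : Matrix m m ℂ) * (hM.1.eigenvectorUnitary : Matrix m m ℂ) = 1 :=
    hM.1.eigenvectorUnitary.2.1
  rw [h1, one_mul, Matrix.trace_diagonal, Complex.re_sum]
  refine Finset.sum_congr rfl fun i _ => ?_
  simp [max_eq_left (hM.eigenvalues_nonneg i)]

lemma psd_trace_re_nonneg {m : Type*} [Fintype m] [DecidableEq m] {M : Matrix m m ℂ}
    (hM : M.PosSemidef) : 0 ≤ (Matrix.trace M).re := by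
  rw [Matrix.trace, Complex.re_sum]
  refine Finset.sum_nonneg fun i _ => ?_
  have := hM.re_dotProduct_nonneg (Pi.single i 1)
  simpa [dotProduct, Matrix.mulVec, Pi.single_apply, Finset.sum_ite_eq,
    Matrix.diag] using this

lemma traceNorm_eq {α β : Type*} [Fintype α] [Fintype β] [DecidableEq β]
    (Hm : Matrix α β ℂ) (L : Matrix β β ℂ) (hL : L.PosSemidef)
    (hsq : Hmᴴ * Hm = L * L) : traceNorm Hm = (Matrix.trace L).re := by
  have hpsd := Matrix.posSemidef_conjTranspose_mul_self Hm
  have hLeq : L = hpsd.sqrt := hL.eq_sqrt_of_sq_eq hpsd (by rw [pow_two, ← hsq])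
  rw [hLeq, trace_sqrt, traceNorm]

lemma frob_re {α β : Type*} [Fintype α] [Fintype β] [DecidableEq β] (Mm : Matrix α β ℂ) :
    (Matrix.trace (Mmᴴ * Mm)).re = ∑ j, ∑ i, Complex.normSq (Mm i j) := by
  rw [Matrix.trace, Complex.re_sum]
  refine Finset.sum_congr rfl fun j _ => ?_
  rw [Matrix.diag, Matrix.mul_apply, Complex.re_sum]
  refine Finset.sum_congr rfl fun i _ => ?_
  rw [Matrix.conjTranspose_apply, Complex.star_def, ← Complex.normSq_eq_conj_mul_self]
  simp

lemma eq_zero_of_frob {α β : Type*} [Fintype α] [Fintype β] [DecidableEq β]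
    (Mm : Matrix α β ℂ) (h : (Matrix.trace (Mmᴴ * Mm)).re = 0) : Mm = 0 := by
  rw [frob_re] at h
  ext i j
  have h2 : ∀ j ∈ Finset.univ, (0:ℝ) ≤ ∑ i, Complex.normSq (Mm i j) :=
    fun j _ => Finset.sum_nonneg fun i _ => Complex.normSq_nonneg _
  have := (Finset.sum_eq_zero_iff_of_nonneg h2).mp h j (Finset.mem_univ j)
  have := (Finset.sum_eq_zero_iff_of_nonneg
    (fun i _ => Complex.normSq_nonneg (Mm i j))).mp this i (Finset.mem_univ i)
  simpa [Complex.normSq_eq_zero] using this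

/-- one SCF step of the NPDo iteration increases the sum-of-coupled-traces
objective by at least `η = ‖ℋ(X)‖_tr − Re tr(Xᴴ ℋ(X)) ≥ 0`, and `η = 0` iff
`ℋ(X) = X (Xᴴ ℋ(X))` is already a polar decomposition. -/
theorem stmt_3 (n k M : ℕ) (hk : 1 ≤ k) (hkn : k ≤ n) (hM : 1 ≤ M)
    (A : Fin M → Matrix (Fin n) (Fin n) ℂ) (hA : ∀ i, (A i).PosSemidef)
    (ki : Fin M → ℕ) (c : ∀ i, Fin (ki i) → Fin k) (hc : ∀ i, Function.Injective (c i))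
    (J : ∀ i, Matrix (Fin k) (Fin (ki i)) ℂ)
    (hJ : ∀ i, J i = Matrix.of fun a b => if a = c i b then 1 else 0)
    (f : Matrix (Fin n) (Fin k) ℂ → ℝ)
    (hf : ∀ X, f X = ∑ i, (Matrix.trace ((X * J i)ᴴ * A i * (X * J i))).re)
    (H : Matrix (Fin n) (Fin k) ℂ → Matrix (Fin n) (Fin k) ℂ)
    (hH : ∀ X, H X = ∑ i, (2 : ℂ) • (A i * X * J i * (J i)ᵀ))
    (X X' : Matrix (Fin n) (Fin k) ℂ) (hX : Xᴴ * X = 1) (hX' : X'ᴴ * X' = 1)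
    (Λ : Matrix (Fin k) (Fin k) ℂ) (hΛ : Λ.PosSemidef) (hpolar : H X = X' * Λ)
    (η : ℝ) (hη : η = traceNorm (H X) - (Matrix.trace (Xᴴ * H X)).re) :
    f X + η ≤ f X' ∧ 0 ≤ η ∧
      (η = 0 ↔ H X = X * (Xᴴ * H X) ∧ (Xᴴ * H X).PosSemidef) := by
  -- J has real entries
  have hJt : ∀ i, (J i)ᴴ = (J i)ᵀ := by
    intro i
    ext a b
    simp [hJ, Matrix.conjTranspose_apply, Matrix.transpose_apply, apply_ite (starRingEnd ℂ)]
  set T : Matrix (Fin n) (Fin k) ℂ → Matrix (Fin n) (Fin k) ℂ → Fin M → ℂ :=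
    fun Y Z i => Matrix.trace ((Y * J i)ᴴ * A i * (Z * J i)) with hT
  have hTcyc : ∀ Y Z i, T Y Z i = Matrix.trace (Yᴴ * (A i * Z * J i * (J i)ᵀ)) := by
    intro Y Z i
    rw [hT]
    calc Matrix.trace ((Y * J i)ᴴ * A i * (Z * J i))
        = Matrix.trace ((J i)ᴴ * (Yᴴ * (A i * (Z * J i)))) := by
          simp only [Matrix.conjTranspose_mul, Matrix.mul_assoc]
      _ = Matrix.trace ((Yᴴ * (A i * (Z * J i))) * (J i)ᴴ) := Matrix.trace_mul_comm _ _
      _ = Matrix.trace (Yᴴ * (A i * Z * J i * (J i)ᵀ)) := by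
          rw [hJt]; simp only [Matrix.mul_assoc]
  have hTrH : ∀ Y, Matrix.trace (Yᴴ * H X) = ∑ i, 2 * T Y X i := by
    intro Y
    rw [hH, Matrix.mul_sum, Matrix.trace_sum]
    refine Finset.sum_congr rfl fun i _ => ?_
    rw [Matrix.mul_smul, Matrix.trace_smul, smul_eq_mul, hTcyc]
  have hsym : ∀ Y Z i, (T Z Y i).re = (T Y Z i).re := by
    intro Y Z i
    have hst : T Z Y i = star (T Y Z i) := by
      rw [hT]
      dsimp only
      rw [← Matrix.trace_conjTranspose]
      simp only [Matrix.conjTranspose_mul, Matrix.conjTranspose_conjTranspose, (hA i).1.eq,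
        Matrix.mul_assoc]
    rw [hst, Complex.star_def, Complex.conj_re]
  have hpos : ∀ Y i, 0 ≤ (T Y Y i).re := fun Y i =>
    psd_trace_re_nonneg ((hA i).conjTranspose_mul_mul_same (Y * J i))
  have hfT : ∀ Y, f Y = ∑ i, (T Y Y i).re := fun Y => by rw [hf, hT]
  have h2re : ∀ z : ℂ, ((2 : ℂ) * z).re = 2 * z.re := by
    intro z; simp [Complex.mul_re]
  have hXHX : (Matrix.trace (Xᴴ * H X)).re = 2 * f X := by
    rw [hTrH, Complex.re_sum, hfT, Finset.mul_sum]
    exact Finset.sum_congr rfl fun i _ => h2re _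
  -- trace norm equals trace of Λ
  have hsqΛ : (H X)ᴴ * (H X) = Λ * Λ := by
    rw [hpolar, Matrix.conjTranspose_mul]
    calc Λᴴ * X'ᴴ * (X' * Λ) = Λᴴ * ((X'ᴴ * X') * Λ) := by simp only [Matrix.mul_assoc]
      _ = Λ * Λ := by rw [hX', one_mul, hΛ.1.eq]
  have htn : traceNorm (H X) = (Matrix.trace Λ).re := traceNorm_eq _ _ hΛ hsqΛ
  have hX'HX : Matrix.trace (X'ᴴ * H X) = Matrix.trace Λ := by
    rw [hpolar, ← Matrix.mul_assoc, hX', one_mul]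
  -- main inequality
  have hexp : ∀ i, T (X' - X) (X' - X) i = T X' X' i - T X' X i - T X X' i + T X X i := by
    intro i
    simp only [hT]
    simp only [Matrix.sub_mul, Matrix.conjTranspose_sub, Matrix.mul_sub, Matrix.trace_sub]
    ring
  have h1 : ∀ i, (T (X' - X) (X' - X) i).re
      = (T X' X' i).re - 2 * (T X' X i).re + (T X X i).re := by
    intro i
    rw [hexp i]
    have := hsym X' X i
    simp only [Complex.sub_re, Complex.add_re]
    linarith
  have hkey : (0:ℝ) ≤ ∑ i, ((T X' X' i).re - 2 * (T X' X i).re + (T X X i).re) := by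
    rw [← Finset.sum_congr rfl (fun i _ => h1 i)]
    exact Finset.sum_nonneg fun i _ => hpos _ i
  have hsplit : ∑ i, ((T X' X' i).re - 2 * (T X' X i).re + (T X X i).re)
      = f X' - (Matrix.trace Λ).re + f X := by
    rw [Finset.sum_add_distrib, Finset.sum_sub_distrib, hfT X', hfT X, ← hX'HX, hTrH,
      Complex.re_sum]
    congr 1
    congr 1
    exact Finset.sum_congr rfl fun i _ => (h2re _).symm
  rw [hsplit] at hkey
  -- the Frobenius computation for η
  set S := hΛ.sqrt with hSdef
  have hS : S.PosSemidef := hΛ.posSemidef_sqrt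
  have hSS : S * S = Λ := hΛ.sqrt_mul_self
  set D := X * S - X' * S with hD
  have t1 : Matrix.trace ((X * S)ᴴ * (X * S)) = Matrix.trace Λ := by
    rw [Matrix.conjTranspose_mul, Matrix.mul_assoc, ← Matrix.mul_assoc Xᴴ X, hX, one_mul,
      hS.1.eq, hSS]
  have t2 : Matrix.trace ((X' * S)ᴴ * (X' * S)) = Matrix.trace Λ := by
    rw [Matrix.conjTranspose_mul, Matrix.mul_assoc, ← Matrix.mul_assoc X'ᴴ X', hX', one_mul,
      hS.1.eq, hSS]
  have t3 : Matrix.trace ((X * S)ᴴ * (X' * S)) = Matrix.trace (Xᴴ * H X) := by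
    rw [Matrix.conjTranspose_mul, Matrix.mul_assoc, Matrix.trace_mul_comm Sᴴ,
      hS.1.eq]
    rw [Matrix.mul_assoc, Matrix.mul_assoc, hSS, hpolar]
  have t4 : Matrix.trace ((X' * S)ᴴ * (X * S)) = star (Matrix.trace (Xᴴ * H X)) := by
    rw [← t3, ← Matrix.trace_conjTranspose]
    congr 1
    simp only [Matrix.conjTranspose_mul, Matrix.conjTranspose_conjTranspose, Matrix.mul_assoc]
  have hDtr : (Matrix.trace (Dᴴ * D)).re = 2 * η := by
    have hexp2 : Matrix.trace (Dᴴ * D)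
        = Matrix.trace ((X * S)ᴴ * (X * S)) - Matrix.trace ((X' * S)ᴴ * (X * S))
          - Matrix.trace ((X * S)ᴴ * (X' * S)) + Matrix.trace ((X' * S)ᴴ * (X' * S)) := by
      rw [hD]
      simp only [Matrix.conjTranspose_sub, Matrix.sub_mul, Matrix.mul_sub, Matrix.trace_sub]
      ring
    rw [hexp2, t1, t2, t3, t4]
    have : ∀ z : ℂ, (star z).re = z.re := fun z => by rw [Complex.star_def, Complex.conj_re]
    simp only [Complex.add_re, Complex.sub_re, this]
    rw [hη, htn]
    ring
  have hηnonneg : 0 ≤ η := by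
    have := psd_trace_re_nonneg (Matrix.posSemidef_conjTranspose_mul_self D)
    linarith [hDtr ▸ this]
  refine ⟨?_, hηnonneg, ?_, ?_⟩
  · -- f X + η ≤ f X'
    rw [hη, htn, hXHX]
    linarith
  · -- η = 0 → polar decomposition
    intro hη0
    have hD0 : D = 0 := by
      apply eq_zero_of_frob
      rw [hDtr, hη0]; ring
    have hXS : X * S = X' * S := sub_eq_zero.mp hD0
    have hHXΛ : H X = X * Λ := by
      rw [hpolar, ← hSS, ← Matrix.mul_assoc, ← hXS, Matrix.mul_assoc, hSS]
    have hXHXeq : Xᴴ * H X = Λ := by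
      rw [hHXΛ, ← Matrix.mul_assoc, hX, one_mul]
    rw [hXHXeq]
    exact ⟨hHXΛ, hΛ⟩
  · -- polar decomposition → η = 0
    rintro ⟨hpd, hpsd⟩
    have key : (X * (Xᴴ * H X))ᴴ * (X * (Xᴴ * H X)) = (Xᴴ * H X) * (Xᴴ * H X) := by
      rw [Matrix.conjTranspose_mul, Matrix.mul_assoc, ← Matrix.mul_assoc Xᴴ X, hX, one_mul,
        hpsd.1.eq]
    have hsq2 : (H X)ᴴ * (H X) = (Xᴴ * H X) * (Xᴴ * H X) := by
      conv_lhs => rw [hpd]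
      exact key
    have := traceNorm_eq (H X) _ hpsd hsq2
    rw [hη, this, sub_self]
end

section
/- Theorem 3.2 (KKT condition at a global maximizer). Let f and the partial Euclidean gradients ℋ_ℓ be as defined in the context. Suppose (P_{*1},…,P_{*m}) with each P_{*ℓ} ∈ ℂ^{n_ℓ×k_ℓ} orthonormal is a global maximizer of f over tuples of orthonormal matrices, i.e., f(P_{*1},…,P_{*m}) ≥ f(P_1,…,P_m) for all tuples with P_ℓ ∈ ℂ^{n_ℓ×k_ℓ} orthonormal. Then for every 1 ≤ ℓ ≤ m, ℋ_ℓ(P_{*1},…,P_{*m}) = P_{*ℓ}·Λ_{*ℓ} with Λ_{*ℓ} := P_{*ℓ}^H ℋ_ℓ(P_{*1},…,P_{*m}) Hermitian positive semidefinite; i.e., each ℋ_ℓ(P_{*1},…,P_{*m}) admits P_{*ℓ} as an orthonormal polar factor. -/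
open Matrix Filter Topology
open scoped ComplexOrder Classical
set_option linter.unusedSectionVars false
set_option maxHeartbeats 1000000

/-- The entries of the multi-mode product `B ×₁ P₁ᴴ ×₂ ⋯ ×ₘ Pₘᴴ` of an `m`-mode tensor
`B` of size `n 0 × ⋯ × n (m-1)` with the conjugate transposes of the matrices `P ℓ`.
The column index set of `P ℓ` is `(s : Fin t) × Fin (κ ℓ s)`, encoding the partition of
`k ℓ = Σ s, κ ℓ s` into `t` blocks (block `s` has the indices with first component `s`). -/
noncomputable def multiProd {m t : ℕ} {n : Fin m → ℕ} {κ : Fin m → Fin t → ℕ}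
    (B : (∀ ℓ, Fin (n ℓ)) → ℂ)
    (P : ∀ ℓ, Matrix (Fin (n ℓ)) ((s : Fin t) × Fin (κ ℓ s)) ℂ) :
    (∀ ℓ, (s : Fin t) × Fin (κ ℓ s)) → ℂ :=
  fun i => ∑ j : ∀ ℓ, Fin (n ℓ), (∏ ℓ, star (P ℓ (j ℓ) (i ℓ))) * B j

/-- The block-diagonal objective
`f(P₁,…,Pₘ) = ‖BDiag(B ×₁ P₁ᴴ ×₂ ⋯ ×ₘ Pₘᴴ)‖_F²`: the sum of `|T(i)|²` over all
multi-indices `i` whose components all lie in the same diagonal block. -/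
noncomputable def fObj {m t : ℕ} {n : Fin m → ℕ} {κ : Fin m → Fin t → ℕ}
    (B : (∀ ℓ, Fin (n ℓ)) → ℂ)
    (P : ∀ ℓ, Matrix (Fin (n ℓ)) ((s : Fin t) × Fin (κ ℓ s)) ℂ) : ℝ :=
  ∑ i : ∀ ℓ, (s : Fin t) × Fin (κ ℓ s),
    if ∃ s : Fin t, ∀ ℓ, (i ℓ).1 = s then Complex.normSq (multiProd B P i) else 0

/-- The tensor `B_{ℓ,s} = B ×₁ P_{1s}ᴴ ⋯ ×_{ℓ-1} P_{ℓ-1,s}ᴴ ×_{ℓ+1} P_{ℓ+1,s}ᴴ ⋯ ×ₘ P_{ms}ᴴ`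
(mode products by the `s`-th column blocks over every mode except `ℓ`), evaluated at the index
whose `ℓ`-th component is `a` and whose other components are given by `ih`. -/
noncomputable def Bls {m t : ℕ} {n : Fin m → ℕ} {κ : Fin m → Fin t → ℕ}
    (B : (∀ ℓ, Fin (n ℓ)) → ℂ)
    (P : ∀ ℓ, Matrix (Fin (n ℓ)) ((s : Fin t) × Fin (κ ℓ s)) ℂ)
    (ℓ : Fin m) (s : Fin t) (a : Fin (n ℓ))
    (ih : ∀ r : {r : Fin m // r ≠ ℓ}, Fin (κ r.1 s)) : ℂ :=
  ∑ j : ∀ r, Fin (n r),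
    if j ℓ = a then (∏ r : {r : Fin m // r ≠ ℓ}, star (P r.1 (j r.1) ⟨s, ih r⟩)) * B j else 0

/-- The matrix `H_{ℓs}(P₁,…,Pₘ) ∈ ℂ^{n_ℓ×n_ℓ}` with `(a,b)`-entry
`Σ_î B_{ℓ,s}(î[ℓ↦a])·conj(B_{ℓ,s}(î[ℓ↦b]))`, summed over multi-indices `î` with the
`ℓ`-th coordinate ignored. -/
noncomputable def Hmat {m t : ℕ} {n : Fin m → ℕ} {κ : Fin m → Fin t → ℕ}
    (B : (∀ ℓ, Fin (n ℓ)) → ℂ)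
    (P : ∀ ℓ, Matrix (Fin (n ℓ)) ((s : Fin t) × Fin (κ ℓ s)) ℂ)
    (ℓ : Fin m) (s : Fin t) : Matrix (Fin (n ℓ)) (Fin (n ℓ)) ℂ :=
  Matrix.of fun a b =>
    ∑ ih : ∀ r : {r : Fin m // r ≠ ℓ}, Fin (κ r.1 s),
      Bls B P ℓ s a ih * star (Bls B P ℓ s b ih)

/-- The partial Euclidean gradient `ℋ_ℓ(P₁,…,Pₘ) ∈ ℂ^{n_ℓ×k_ℓ}` of `fObj` with respect to
`P ℓ` (for the real inner product `⟨X,Y⟩ = Re tr(Yᴴ X)`): its `s`-th column block is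
`2 · H_{ℓs}(P₁,…,Pₘ) · P_{ℓs}`. -/
noncomputable def scrH {m t : ℕ} {n : Fin m → ℕ} {κ : Fin m → Fin t → ℕ}
    (B : (∀ ℓ, Fin (n ℓ)) → ℂ)
    (P : ∀ ℓ, Matrix (Fin (n ℓ)) ((s : Fin t) × Fin (κ ℓ s)) ℂ)
    (ℓ : Fin m) : Matrix (Fin (n ℓ)) ((s : Fin t) × Fin (κ ℓ s)) ℂ :=
  Matrix.of fun a sc => 2 * ∑ b, Hmat B P ℓ sc.1 a b * P ℓ b sc

section Polar
variable {l n k : Type*} [Fintype l] [Fintype n] [Fintype k]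
  [DecidableEq l] [DecidableEq n] [DecidableEq k]

lemma vvT_conjT (u : n → ℂ) (v : k → ℂ) :
    (vecMulVec u (star v))ᴴ = vecMulVec v (star u) := by
  ext a b; simp [vecMulVec_apply, conjTranspose_apply, mul_comm]

lemma mul_vvT (M : Matrix l n ℂ) (u : n → ℂ) (v : k → ℂ) :
    M * vecMulVec u v = vecMulVec (M *ᵥ u) v := by
  ext a b
  simp [vecMulVec_apply, mul_apply, mulVec, dotProduct, Finset.sum_mul, mul_assoc]

lemma vvT_mul (u : l → ℂ) (v : n → ℂ) (M : Matrix n k ℂ) :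
    vecMulVec u v * M = vecMulVec u (v ᵥ* M) := by
  ext a b
  simp [vecMulVec_apply, mul_apply, vecMul, dotProduct, Finset.mul_sum, mul_assoc]

lemma vvT_mul_vvT (u : l → ℂ) (v w : n → ℂ) (z : k → ℂ) :
    vecMulVec u v * vecMulVec w z = (v ⬝ᵥ w) • vecMulVec u z := by
  rw [mul_vvT]
  ext a b
  simp [vecMulVec_apply, mulVec, dotProduct, Finset.sum_mul, Finset.mul_sum]
  congr 1; ext i; ring

lemma trace_vvT_mul (u : n → ℂ) (v : k → ℂ) (M : Matrix k n ℂ) :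
    (vecMulVec u v * M).trace = v ⬝ᵥ (M *ᵥ u) := by
  simp [trace, mul_apply, vecMulVec_apply, dotProduct, mulVec, diag, Finset.mul_sum]
  rw [Finset.sum_comm]
  congr 1; ext i; congr 1; ext a; ring

lemma dot_self_coe (x : k → ℂ) :
    star x ⬝ᵥ x = ((∑ i, Complex.normSq (x i) : ℝ) : ℂ) := by
  push_cast
  simp only [dotProduct, Pi.star_apply]
  congr 1; ext i
  rw [Complex.star_def, mul_comm, Complex.mul_conj]

lemma unit_of_scale {x : k → ℂ} {r : ℝ} (hr : 0 < r) (hx : star x ⬝ᵥ x = (r:ℂ)) :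
    star (((Real.sqrt r)⁻¹ : ℂ) • x) ⬝ᵥ (((Real.sqrt r)⁻¹ : ℂ) • x) = 1 := by
  rw [star_smul, smul_dotProduct, dotProduct_smul, hx, smul_eq_mul, smul_eq_mul,
    Complex.star_def, ← Complex.ofReal_inv, Complex.conj_ofReal, ← Complex.ofReal_mul,
    ← Complex.ofReal_mul]
  norm_cast
  have h1 : Real.sqrt r * Real.sqrt r = r := Real.mul_self_sqrt hr.le
  have h2 : Real.sqrt r ≠ 0 := by positivity
  field_simp
  rw [Real.sq_sqrt hr.le]

lemma polar_of_opt (A Q : Matrix n k ℂ) (hQ : Qᴴ * Q = 1)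
    (hopt : ∀ U : Matrix n k ℂ, Uᴴ * U = 1 → ((Uᴴ * A).trace).re ≤ ((Qᴴ * A).trace).re) :
    A = Q * (Qᴴ * A) ∧ (Qᴴ * A).PosSemidef := by
  set Λ := Qᴴ * A with hΛ
  have key : ∀ W : Matrix k k ℂ, Wᴴ * W = 1 → ((Wᴴ * Λ).trace).re ≤ (Λ.trace).re := by
    intro W hW
    have h := hopt (Q * W) (by
      rw [conjTranspose_mul, Matrix.mul_assoc, ← Matrix.mul_assoc Qᴴ Q W, hQ, Matrix.one_mul, hW])
    simpa [hΛ, conjTranspose_mul, Matrix.mul_assoc] using h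
  have quad1 : ∀ x : k → ℂ, star x ⬝ᵥ x = 1 → 0 ≤ star x ⬝ᵥ (Λ *ᵥ x) := by
    intro x hx
    set z := star x ⬝ᵥ (Λ *ᵥ x) with hz
    set X := vecMulVec x (star x) with hX
    have hXX : X * X = X := by rw [hX, vvT_mul_vvT, hx, one_smul]
    have hc : ∀ c : ℂ, ‖c‖ = 1 → ((starRingEnd ℂ c - 1) * z).re ≤ 0 := by
      intro c hcabs
      set a := starRingEnd ℂ c - 1 with ha
      set b := c - 1 with hb
      set W : Matrix k k ℂ := 1 + b • X with hW
      have hWH : Wᴴ = 1 + a • X := by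
        rw [hW, conjTranspose_add, conjTranspose_smul, conjTranspose_one, hX, vvT_conjT]
        simp [ha, hb]
      have habc : a + b + a * b = 0 := by
        have h1 : starRingEnd ℂ c * c = 1 := by
          rw [mul_comm, Complex.mul_conj, Complex.normSq_eq_norm_sq, hcabs]
          norm_num
        rw [ha, hb]; ring_nf; linear_combination h1
      have hWunit : Wᴴ * W = 1 := by
        rw [hWH, hW, add_mul, one_mul, mul_add, mul_one, Matrix.smul_mul, Matrix.mul_smul,
          smul_smul, hXX]
        have : (1 : Matrix k k ℂ) + b • X + (a • X + (a * b) • X)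
            = 1 + (a + b + a * b) • X := by
          rw [add_smul, add_smul]; abel
        rw [this, habc, zero_smul, add_zero]
      have htr : (Wᴴ * Λ).trace = Λ.trace + a * z := by
        rw [hWH, add_mul, one_mul, Matrix.smul_mul, trace_add, trace_smul, hX, trace_vvT_mul,
          ← hz, smul_eq_mul]
      have := key W hWunit
      rw [htr, Complex.add_re] at this
      linarith
    by_cases hz0 : z = 0
    · rw [hz0]
    · have habs : ‖z / (‖z‖ : ℂ)‖ = 1 := by
        rw [norm_div, Complex.norm_of_nonneg (norm_nonneg z),
          div_self (norm_ne_zero_iff.mpr hz0)]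
      have h1 := hc _ habs
      have h2 : (starRingEnd ℂ (z / (‖z‖ : ℂ))) * z = (‖z‖ : ℂ) := by
        rw [map_div₀, Complex.conj_ofReal, div_mul_eq_mul_div, mul_comm, Complex.mul_conj,
          Complex.normSq_eq_norm_sq]
        rw [div_eq_iff (by exact_mod_cast norm_ne_zero_iff.mpr hz0)]
        push_cast; ring
      rw [sub_mul, one_mul, h2, Complex.sub_re, Complex.ofReal_re] at h1
      have hre : ‖z‖ ≤ z.re := by linarith
      have habsre : |z.re| ≤ ‖z‖ := Complex.abs_re_le_norm z
      have hrepos : 0 ≤ z.re := le_trans (norm_nonneg z) hre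
      have hreeq : z.re = ‖z‖ := le_antisymm (le_trans (le_abs_self _) habsre) hre
      have him : z.im = 0 := by
        have h3 : z.re ^ 2 + z.im ^ 2 = ‖z‖ ^ 2 := by
          rw [← Complex.normSq_eq_norm_sq, Complex.normSq_apply]; ring
        nlinarith [sq_nonneg z.im]
      rw [Complex.le_def]
      simp [hrepos, him]
  have quad : ∀ x : k → ℂ, 0 ≤ star x ⬝ᵥ (Λ *ᵥ x) := by
    intro x
    by_cases hx0 : x = 0
    · simp [hx0]
    · set r : ℝ := ∑ i, Complex.normSq (x i) with hr
      have hrpos : 0 < r := by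
        rw [hr]
        have : ∃ i, x i ≠ 0 := by
          by_contra h
          push_neg at h
          exact hx0 (funext h)
        obtain ⟨i, hi⟩ := this
        exact Finset.sum_pos' (fun j _ => Complex.normSq_nonneg _)
          ⟨i, Finset.mem_univ i, Complex.normSq_pos.mpr hi⟩
      set s : ℝ := Real.sqrt r with hs
      have hspos : 0 < s := Real.sqrt_pos.mpr hrpos
      set y : k → ℂ := ((s : ℂ)⁻¹) • x with hy
      have hyunit : star y ⬝ᵥ y = 1 := by
        rw [hy, hs]
        exact unit_of_scale hrpos (by rw [dot_self_coe, ← hr])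
      have h := quad1 y hyunit
      have hexp : star x ⬝ᵥ (Λ *ᵥ x) = ((s * s : ℝ) : ℂ) * (star y ⬝ᵥ (Λ *ᵥ y)) := by
        rw [hy, star_smul, smul_dotProduct, mulVec_smul, dotProduct_smul, smul_eq_mul,
          smul_eq_mul, Complex.star_def, ← Complex.ofReal_inv, Complex.conj_ofReal]
        have hsne : (s : ℂ) ≠ 0 := by exact_mod_cast ne_of_gt hspos
        push_cast
        field_simp
      rw [hexp]
      exact mul_nonneg (by rw [Complex.zero_le_real]; positivity) h
  have himzero : ∀ x : k → ℂ, (star x ⬝ᵥ (Λ *ᵥ x)).im = 0 := by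
    intro x
    have := quad x
    rw [Complex.le_def] at this
    exact this.2.symm
  have hsym : ∀ x y : k → ℂ,
      star y ⬝ᵥ (Λ *ᵥ x) = starRingEnd ℂ (star x ⬝ᵥ (Λ *ᵥ y)) := by
    intro x y
    have h1 := himzero (x + y)
    rw [star_add, add_dotProduct, mulVec_add, dotProduct_add, dotProduct_add] at h1
    simp only [Complex.add_im] at h1
    rw [himzero x, himzero y] at h1
    have h2 := himzero (x + Complex.I • y)
    simp only [star_add, star_smul, add_dotProduct, smul_dotProduct, mulVec_add, mulVec_smul,
      dotProduct_add, dotProduct_smul, smul_eq_mul, Complex.star_def, Complex.conj_I] at h2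
    simp only [Complex.add_im, Complex.add_re, Complex.mul_im, Complex.neg_re, Complex.neg_im,
      Complex.I_re, Complex.I_im, Complex.mul_re] at h2
    rw [himzero x] at h2
    have hyim := himzero y
    apply Complex.ext
    · simp only [Complex.conj_re]
      linarith [himzero y]
    · simp only [Complex.conj_im]
      linarith
  have herm : Λ.IsHermitian := by
    ext a b
    have h := hsym (Pi.single b 1) (Pi.single a 1)
    have e1 : ∀ (c d : k), star (Pi.single c (1:ℂ)) ⬝ᵥ (Λ *ᵥ Pi.single d 1) = Λ c d := by
      intro c d
      simp [dotProduct, mulVec, Pi.single_apply, Finset.mul_sum]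
    rw [e1, e1] at h
    rw [conjTranspose_apply, Complex.star_def]
    exact h.symm
  refine ⟨?_, PosSemidef.of_dotProduct_mulVec_nonneg herm quad⟩
  by_contra hne
  have hMne : A - Q * Λ ≠ 0 := sub_ne_zero_of_ne hne
  set M := A - Q * Λ with hM
  have hQM : Qᴴ * M = 0 := by
    rw [hM, Matrix.mul_sub, ← Matrix.mul_assoc, ← hΛ, hΛ, hQ, Matrix.one_mul]
    exact sub_self _
  obtain ⟨a0, s0, hentry⟩ : ∃ a s, M a s ≠ 0 := by
    by_contra h
    push_neg at h
    exact hMne (by ext a s; exact h a s)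
  set v : n → ℂ := fun a => M a s0 with hv
  set r : ℝ := ∑ i, Complex.normSq (v i) with hrdef
  have hrpos : 0 < r := by
    rw [hrdef]
    exact Finset.sum_pos' (fun j _ => Complex.normSq_nonneg _)
      ⟨a0, Finset.mem_univ a0, by simpa [hv] using (Complex.normSq_pos.mpr hentry)⟩
  set r0 : ℝ := Real.sqrt r with hr0
  have hr0pos : 0 < r0 := Real.sqrt_pos.mpr hrpos
  set u : n → ℂ := ((r0 : ℂ)⁻¹) • v with hu
  have huu : star u ⬝ᵥ u = 1 := by
    rw [hu, hr0]
    exact unit_of_scale hrpos (by rw [dot_self_coe, ← hrdef])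
  have hQv : Qᴴ *ᵥ v = 0 := by
    funext j
    have := congrFun (congrFun hQM j) s0
    simpa [mulVec, dotProduct, mul_apply, hv] using this
  have hQu : Qᴴ *ᵥ u = 0 := by
    rw [hu, mulVec_smul, hQv, smul_zero]
  set x : k → ℂ := Pi.single s0 1 with hxdef
  have hxx : star x ⬝ᵥ x = 1 := by
    simp [hxdef, dotProduct, Pi.single_apply]
  have huAx : star u ⬝ᵥ (A *ᵥ x) = (r0 : ℂ) := by
    have hA : A = M + Q * Λ := by rw [hM, sub_add_cancel]
    rw [hA, add_mulVec, dotProduct_add]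
    have t1 : star u ⬝ᵥ (M *ᵥ x) = (r0 : ℂ) := by
      have hMx : M *ᵥ x = v := by
        funext a; simp [hxdef, hv, mulVec, dotProduct, Pi.single_apply]
      rw [hMx, hu, star_smul, smul_dotProduct, dot_self_coe, ← hrdef, smul_eq_mul,
        Complex.star_def, ← Complex.ofReal_inv, Complex.conj_ofReal, ← Complex.ofReal_mul]
      norm_cast
      rw [hr0]
      rw [inv_mul_eq_div, div_eq_iff (by positivity)]
      exact (Real.mul_self_sqrt hrpos.le).symm
    have t2 : star u ⬝ᵥ ((Q * Λ) *ᵥ x) = 0 := by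
      rw [← mulVec_mulVec, dotProduct_mulVec]
      have : star u ᵥ* Q = 0 := by
        have := congrArg star hQu
        rw [star_mulVec, conjTranspose_conjTranspose] at this
        simpa using this
      rw [this, zero_dotProduct]
    rw [t1, t2, add_zero]
  -- the diagonal entry z
  set z := star x ⬝ᵥ (Λ *ᵥ x) with hzdef
  have hznn := quad x
  have hzre : 0 ≤ z.re := by
    rw [Complex.le_def] at hznn; exact hznn.1
  have hzim : z.im = 0 := himzero x
  -- choose epsilon
  set ε : ℝ := min (1/2) (r0 / (2 * (z.re + 1))) with hε
  have hεpos : 0 < ε := by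
    apply lt_min (by norm_num)
    positivity
  have hεle : ε ≤ 1/2 := min_le_left _ _
  have hεle2 : ε ≤ r0 / (2 * (z.re + 1)) := min_le_right _ _
  set cs : ℝ := Real.sqrt (1 - ε^2) with hcs
  have hcs2 : cs^2 = 1 - ε^2 := Real.sq_sqrt (by nlinarith)
  have hcsnn : 0 ≤ cs := Real.sqrt_nonneg _
  have hcsle1 : cs ≤ 1 := by nlinarith
  have hcsge : 1 - ε^2 ≤ cs := by nlinarith
  set X := vecMulVec x (star x) with hX
  have hXX : X * X = X := by rw [hX, vvT_mul_vvT, hxx, one_smul]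
  set W : Matrix k k ℂ := 1 + ((cs : ℂ) - 1) • X with hW
  have hWH : Wᴴ = W := by
    rw [hW, conjTranspose_add, conjTranspose_smul, conjTranspose_one, hX, vvT_conjT]
    congr 1
    rw [star_sub, star_one, Complex.star_def, Complex.conj_ofReal]
  have hWW : W * W = 1 + ((cs:ℂ)^2 - 1) • X := by
    rw [hW, add_mul, one_mul, mul_add, mul_one, Matrix.smul_mul, Matrix.mul_smul, smul_smul, hXX]
    have : (1 : Matrix k k ℂ) + ((cs:ℂ)-1) • X + (((cs:ℂ)-1) • X + (((cs:ℂ)-1) * ((cs:ℂ)-1)) • X)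
        = 1 + (((cs:ℂ)-1) + ((cs:ℂ)-1) + ((cs:ℂ)-1)*((cs:ℂ)-1)) • X := by
      rw [add_smul, add_smul]; abel
    rw [this]
    congr 1
    congr 1
    ring
  clear_value X W
  set U : Matrix n k ℂ := Q * W + (ε : ℂ) • vecMulVec u (star x) with hU
  have hUH : Uᴴ = W * Qᴴ + (ε : ℂ) • vecMulVec x (star u) := by
    rw [hU, conjTranspose_add, conjTranspose_smul, conjTranspose_mul, hWH, vvT_conjT]
    congr 2
    rw [Complex.star_def, Complex.conj_ofReal]
  have hQvv : Qᴴ * vecMulVec u (star x) = 0 := by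
    rw [mul_vvT, hQu]
    ext a b; simp [vecMulVec_apply]
  have hvvQ : vecMulVec x (star u) * Q = 0 := by
    rw [vvT_mul]
    have : star u ᵥ* Q = 0 := by
      have := congrArg star hQu
      rw [star_mulVec, conjTranspose_conjTranspose] at this
      simpa using this
    rw [this]
    ext a b; simp [vecMulVec_apply]
  have hUunit : Uᴴ * U = 1 := by
    rw [hUH, hU]
    rw [Matrix.add_mul, Matrix.mul_add, Matrix.mul_add]
    have e1 : W * Qᴴ * (Q * W) = W * W := by
      rw [Matrix.mul_assoc, ← Matrix.mul_assoc Qᴴ, hQ, Matrix.one_mul]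
    have e2 : W * Qᴴ * ((ε:ℂ) • vecMulVec u (star x)) = 0 := by
      rw [Matrix.mul_smul, Matrix.mul_assoc, hQvv, Matrix.mul_zero, smul_zero]
    have e3 : ((ε:ℂ) • vecMulVec x (star u)) * (Q * W) = 0 := by
      rw [Matrix.smul_mul, ← Matrix.mul_assoc, hvvQ, Matrix.zero_mul, smul_zero]
    have e4 : ((ε:ℂ) • vecMulVec x (star u)) * ((ε:ℂ) • vecMulVec u (star x))
        = ((ε:ℂ)^2) • X := by
      rw [Matrix.smul_mul, Matrix.mul_smul, smul_smul, vvT_mul_vvT, huu, one_smul, hX]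
      congr 1; ring
    rw [e1, e2, e3, e4, hWW]
    have h5 : ((cs:ℂ)^2 - 1) + (ε:ℂ)^2 = 0 := by
      have h6 : ((cs^2 : ℝ) : ℂ) = ((1 - ε^2 : ℝ) : ℂ) := by rw [hcs2]
      push_cast at h6
      linear_combination h6
    rw [add_zero, zero_add, add_assoc, ← add_smul, h5, zero_smul, add_zero]
  have htrU : ((Uᴴ * A).trace) = Λ.trace + ((cs:ℂ) - 1) * z + (ε:ℂ) * (r0:ℂ) := by
    rw [hUH, Matrix.add_mul, Matrix.smul_mul, trace_add, trace_smul, trace_vvT_mul, huAx]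
    rw [Matrix.mul_assoc, ← hΛ]
    rw [hW, add_mul, one_mul, Matrix.smul_mul, trace_add, trace_smul, hX, trace_vvT_mul, ← hzdef]
    rw [smul_eq_mul, smul_eq_mul]
  have hineq := hopt U hUunit
  rw [htrU] at hineq
  simp only [Complex.add_re, Complex.mul_re, Complex.sub_re, Complex.sub_im, Complex.one_re,
    Complex.one_im, Complex.ofReal_re, Complex.ofReal_im, hzim] at hineq
  -- hineq : Λ.trace.re + ((cs - 1) * z.re - 0) + (ε * r0 - 0) ≤ Λ.trace.re
  have hfinal : ε * r0 ≤ (1 - cs) * z.re := by nlinarith [hineq]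
  have h1cs : 1 - cs ≤ ε^2 := by nlinarith
  have : ε * r0 ≤ ε^2 * z.re := by nlinarith
  have hr0le : r0 ≤ ε * z.re := by
    have := (mul_le_mul_iff_right₀ hεpos).mp (by nlinarith : ε * r0 ≤ ε * (ε * z.re))
    linarith
  have : ε * z.re < r0 := by
    have h2 : ε * z.re ≤ (r0 / (2 * (z.re + 1))) * z.re := by
      apply mul_le_mul_of_nonneg_right hεle2 hzre
    have h3 : (r0 / (2 * (z.re + 1))) * z.re < r0 := by
      rw [div_mul_eq_mul_div, div_lt_iff₀ (by positivity)]
      nlinarith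
    linarith
  linarith

end Polar

section Tensor


lemma prod_split {α : Type*} [Fintype α] [DecidableEq α] {M : Type*} [CommMonoid M]
    (ℓ : α) (g : α → M) :
    ∏ r, g r = g ℓ * ∏ r : {r : α // r ≠ ℓ}, g r.1 := by
  rw [Fintype.prod_eq_mul_prod_compl ℓ]
  congr 1
  exact Finset.prod_subtype _ (fun r => by simp) _

variable {m t : ℕ} {n : Fin m → ℕ} {κ : Fin m → Fin t → ℕ}
  (B : (∀ ℓ, Fin (n ℓ)) → ℂ)
  (P : ∀ ℓ, Matrix (Fin (n ℓ)) ((s : Fin t) × Fin (κ ℓ s)) ℂ)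

lemma Bls_update (ℓ : Fin m) (U : Matrix (Fin (n ℓ)) ((s : Fin t) × Fin (κ ℓ s)) ℂ)
    (s : Fin t) (a : Fin (n ℓ)) (ih : ∀ r : {r : Fin m // r ≠ ℓ}, Fin (κ r.1 s)) :
    Bls B (Function.update P ℓ U) ℓ s a ih = Bls B P ℓ s a ih := by
  unfold Bls
  refine Finset.sum_congr rfl fun j _ => ?_
  have h : (∏ r : {r : Fin m // r ≠ ℓ}, star ((Function.update P ℓ U) r.1 (j r.1) ⟨s, ih r⟩))
      = ∏ r : {r : Fin m // r ≠ ℓ}, star (P r.1 (j r.1) ⟨s, ih r⟩) :=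
    Finset.prod_congr rfl fun r _ => by rw [Function.update_of_ne r.2]
  rw [h]

lemma Hmat_update (ℓ : Fin m) (U : Matrix (Fin (n ℓ)) ((s : Fin t) × Fin (κ ℓ s)) ℂ)
    (s : Fin t) :
    Hmat B (Function.update P ℓ U) ℓ s = Hmat B P ℓ s := by
  unfold Hmat
  ext a b
  simp only [Matrix.of_apply, Bls_update]

-- sesquilinear form of Hmat
noncomputable def psi (ℓ : Fin m) (s : Fin t)
    (ih : ∀ r : {r : Fin m // r ≠ ℓ}, Fin (κ r.1 s)) (x : Fin (n ℓ) → ℂ) : ℂ :=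
  ∑ a, star (x a) * Bls B P ℓ s a ih

lemma Hmat_dot (ℓ : Fin m) (s : Fin t) (x y : Fin (n ℓ) → ℂ) :
    star x ⬝ᵥ (Hmat B P ℓ s *ᵥ y) = ∑ ih, psi B P ℓ s ih x * star (psi B P ℓ s ih y) := by
  unfold Hmat psi
  simp only [dotProduct, mulVec, Matrix.of_apply, Pi.star_apply]
  have expand : ∀ ih, (∑ a, star (x a) * Bls B P ℓ s a ih) * star (∑ b, star (y b) * Bls B P ℓ s b ih)
      = ∑ a, ∑ b, star (x a) * (Bls B P ℓ s a ih * star (Bls B P ℓ s b ih) * y b) := by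
    intro ih
    rw [star_sum, Finset.sum_mul_sum]
    refine Finset.sum_congr rfl fun a _ => Finset.sum_congr rfl fun b _ => ?_
    rw [star_mul', star_star]
    ring
  rw [Finset.sum_congr rfl (fun ih _ => expand ih)]
  calc ∑ a, star (x a) * (∑ b, (∑ ih, Bls B P ℓ s a ih * star (Bls B P ℓ s b ih)) * y b)
      = ∑ a, ∑ b, ∑ ih, star (x a) * (Bls B P ℓ s a ih * star (Bls B P ℓ s b ih) * y b) := by
        refine Finset.sum_congr rfl fun a _ => ?_
        rw [Finset.mul_sum]
        refine Finset.sum_congr rfl fun b _ => ?_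
        rw [Finset.sum_mul, Finset.mul_sum]
    _ = ∑ a, ∑ ih, ∑ b, star (x a) * (Bls B P ℓ s a ih * star (Bls B P ℓ s b ih) * y b) :=
        Finset.sum_congr rfl fun a _ => Finset.sum_comm
    _ = ∑ ih, ∑ a, ∑ b, star (x a) * (Bls B P ℓ s a ih * star (Bls B P ℓ s b ih) * y b) :=
        Finset.sum_comm

lemma sigma_cast_eq {t : ℕ} {κ' : Fin t → ℕ} (e : (s : Fin t) × Fin (κ' s)) (s : Fin t)
    (h : e.1 = s) :
    (⟨s, Fin.cast (congrArg κ' h) e.2⟩ : (s : Fin t) × Fin (κ' s)) = e := by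
  cases e
  subst h
  rfl

lemma Hmat_quad (ℓ : Fin m) (s : Fin t) (x : Fin (n ℓ) → ℂ) :
    star x ⬝ᵥ (Hmat B P ℓ s *ᵥ x)
    = ((∑ ih, Complex.normSq (psi B P ℓ s ih x) : ℝ) : ℂ) := by
  rw [Hmat_dot]
  push_cast
  refine Finset.sum_congr rfl fun ih _ => ?_
  rw [Complex.star_def, Complex.mul_conj]

lemma multiProd_factor (ℓ0 : Fin m) (s : Fin t) (c : ∀ ℓ, Fin (κ ℓ s)) :
    multiProd B P (fun ℓ => ⟨s, c ℓ⟩)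
    = psi B P ℓ0 s (fun r => c r.1) (fun a => P ℓ0 a ⟨s, c ℓ0⟩) := by
  unfold multiProd psi Bls
  symm
  calc (∑ a, star (P ℓ0 a ⟨s, c ℓ0⟩) * ∑ j : ∀ r, Fin (n r),
          if j ℓ0 = a then (∏ r : {r : Fin m // r ≠ ℓ0}, star (P r.1 (j r.1) ⟨s, c r.1⟩)) * B j else 0)
      = ∑ a, ∑ j : ∀ r, Fin (n r),
          if j ℓ0 = a then star (P ℓ0 a ⟨s, c ℓ0⟩)
            * ((∏ r : {r : Fin m // r ≠ ℓ0}, star (P r.1 (j r.1) ⟨s, c r.1⟩)) * B j) else 0 := by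
        refine Finset.sum_congr rfl fun a _ => ?_
        rw [Finset.mul_sum]
        refine Finset.sum_congr rfl fun j _ => ?_
        rw [mul_ite, mul_zero]
    _ = ∑ j : ∀ r, Fin (n r), ∑ a,
          if j ℓ0 = a then star (P ℓ0 a ⟨s, c ℓ0⟩)
            * ((∏ r : {r : Fin m // r ≠ ℓ0}, star (P r.1 (j r.1) ⟨s, c r.1⟩)) * B j) else 0 :=
        Finset.sum_comm
    _ = ∑ j : ∀ r, Fin (n r), star (P ℓ0 (j ℓ0) ⟨s, c ℓ0⟩)
            * ((∏ r : {r : Fin m // r ≠ ℓ0}, star (P r.1 (j r.1) ⟨s, c r.1⟩)) * B j) := by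
        refine Finset.sum_congr rfl fun j _ => ?_
        rw [Finset.sum_ite_eq]
        simp
    _ = ∑ j : ∀ r, Fin (n r), (∏ ℓ, star (P ℓ (j ℓ) ⟨s, c ℓ⟩)) * B j := by
        refine Finset.sum_congr rfl fun j _ => ?_
        rw [prod_split ℓ0 (fun ℓ => star (P ℓ (j ℓ) ⟨s, c ℓ⟩)), mul_assoc]

lemma fObj_eq (ℓ0 : Fin m) :
    fObj B P = ∑ sc : (s : Fin t) × Fin (κ ℓ0 s),
      (star (fun a => P ℓ0 a sc) ⬝ᵥ (Hmat B P ℓ0 sc.1 *ᵥ fun a => P ℓ0 a sc)).re := by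
  classical
  set g : (∀ ℓ, (s : Fin t) × Fin (κ ℓ s)) → ℝ := fun i => Complex.normSq (multiProd B P i)
    with hg
  have h1 : ∀ i : (∀ ℓ, (s : Fin t) × Fin (κ ℓ s)),
      (if ∃ s : Fin t, ∀ ℓ, (i ℓ).1 = s then g i else 0)
      = ∑ s : Fin t, if ∀ ℓ, (i ℓ).1 = s then g i else 0 := by
    intro i
    by_cases h : ∃ s : Fin t, ∀ ℓ, (i ℓ).1 = s
    · obtain ⟨s0, hs0⟩ := h
      rw [if_pos ⟨s0, hs0⟩, eq_comm, Finset.sum_eq_single s0]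
      · rw [if_pos hs0]
      · intro b _ hb
        rw [if_neg]
        intro hball
        exact hb (((hball ℓ0).symm).trans (hs0 ℓ0))
      · intro hs0'
        exact absurd (Finset.mem_univ s0) hs0'
    · rw [if_neg h, eq_comm]
      exact Finset.sum_eq_zero fun s _ => if_neg (fun hs => h ⟨s, hs⟩)
  have step1 : fObj B P = ∑ s : Fin t, ∑ c : ∀ ℓ, Fin (κ ℓ s), g (fun ℓ => ⟨s, c ℓ⟩) := by
    unfold fObj
    rw [Finset.sum_congr rfl (fun i _ => h1 i), Finset.sum_comm]
    refine Finset.sum_congr rfl fun s _ => ?_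
    rw [← Finset.sum_filter]
    refine Finset.sum_bij'
      (i := fun i hi => fun ℓ => Fin.cast (congrArg (κ ℓ) ((Finset.mem_filter.mp hi).2 ℓ)) (i ℓ).2)
      (j := fun c _ => fun ℓ => ⟨s, c ℓ⟩) ?_ ?_ ?_ ?_ ?_
    · intro a ha; exact Finset.mem_univ _
    · intro c _
      simp only [Finset.mem_filter, Finset.mem_univ, true_and]
      exact fun _ => trivial
    · intro a ha
      funext ℓ
      exact sigma_cast_eq (a ℓ) s ((Finset.mem_filter.mp ha).2 ℓ)
    · intro c _
      funext ℓ
      rfl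
    · intro a ha
      congr 1
      funext ℓ
      exact (sigma_cast_eq (a ℓ) s ((Finset.mem_filter.mp ha).2 ℓ)).symm
  have step2 : ∀ s : Fin t, ∑ c : ∀ ℓ, Fin (κ ℓ s), g (fun ℓ => ⟨s, c ℓ⟩)
      = ∑ cl : Fin (κ ℓ0 s), ∑ ih : ∀ r : {r : Fin m // r ≠ ℓ0}, Fin (κ r.1 s),
          Complex.normSq (psi B P ℓ0 s ih (fun a => P ℓ0 a ⟨s, cl⟩)) := by
    intro s
    have e1 : ∑ c : ∀ ℓ, Fin (κ ℓ s), g (fun ℓ => ⟨s, c ℓ⟩)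
        = ∑ p : Fin (κ ℓ0 s) × (∀ r : {r : Fin m // r ≠ ℓ0}, Fin (κ r.1 s)),
            Complex.normSq (psi B P ℓ0 s p.2 (fun a => P ℓ0 a ⟨s, p.1⟩)) := by
      refine Fintype.sum_equiv (Equiv.piSplitAt ℓ0 (fun ℓ => Fin (κ ℓ s))) _ _ fun c => ?_
      rw [hg]
      simp only [multiProd_factor B P ℓ0 s c, Equiv.piSplitAt_apply]
    rw [e1, Fintype.sum_prod_type]
  rw [step1, Finset.sum_congr rfl (fun s _ => step2 s)]
  rw [← Finset.univ_sigma_univ, Finset.sum_sigma]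
  refine Finset.sum_congr rfl fun s _ => Finset.sum_congr rfl fun cl _ => ?_
  rw [Hmat_quad, Complex.ofReal_re]

lemma trace_scrH (ℓ : Fin m) (U : Matrix (Fin (n ℓ)) ((s : Fin t) × Fin (κ ℓ s)) ℂ) :
    (Uᴴ * scrH B P ℓ).trace
    = 2 * ∑ sc : (s : Fin t) × Fin (κ ℓ s),
        (star (fun a => U a sc) ⬝ᵥ (Hmat B P ℓ sc.1 *ᵥ fun a => P ℓ a sc)) := by
  unfold scrH
  simp only [trace, diag, mul_apply, conjTranspose_apply, Matrix.of_apply, dotProduct, mulVec,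
    Pi.star_apply]
  rw [Finset.mul_sum]
  refine Finset.sum_congr rfl fun sc _ => ?_
  rw [Finset.mul_sum]
  refine Finset.sum_congr rfl fun a _ => ?_
  ring

lemma cross_bound (ℓ : Fin m) (s : Fin t) (u q : Fin (n ℓ) → ℂ) :
    2 * (star u ⬝ᵥ (Hmat B P ℓ s *ᵥ q)).re
    ≤ (star u ⬝ᵥ (Hmat B P ℓ s *ᵥ u)).re + (star q ⬝ᵥ (Hmat B P ℓ s *ᵥ q)).re := by
  rw [Hmat_dot, Hmat_quad, Hmat_quad, Complex.ofReal_re, Complex.ofReal_re, Complex.re_sum,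
    Finset.mul_sum, ← Finset.sum_add_distrib]
  apply Finset.sum_le_sum
  intro ih _
  set a := psi B P ℓ s ih u
  set b := psi B P ℓ s ih q
  simp only [Complex.star_def, Complex.mul_re, Complex.conj_re, Complex.conj_im,
    Complex.normSq_apply]
  nlinarith [sq_nonneg (a.re - b.re), sq_nonneg (a.im - b.im)]

end Tensor

/-- Theorem 3.2, KKT condition at a global maximizer: at a global maximizer
over tuples of orthonormal matrices, each `ℋ_ℓ` admits `P_{*ℓ}` as orthonormal polar factor:
`ℋ_ℓ(P_*) = P_{*ℓ} Λ_{*ℓ}` with `Λ_{*ℓ} = P_{*ℓ}ᴴ ℋ_ℓ(P_*)` Hermitian positive semidefinite. -/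
theorem stmt_8 (m t : ℕ) (hm : 1 ≤ m) (ht : 1 ≤ t)
    (n : Fin m → ℕ) (hn : ∀ ℓ, 1 ≤ n ℓ)
    (κ : Fin m → Fin t → ℕ) (hκ : ∀ ℓ s, 1 ≤ κ ℓ s)
    (hkn : ∀ ℓ, (∑ s, κ ℓ s) ≤ n ℓ)
    (B : (∀ ℓ, Fin (n ℓ)) → ℂ)
    (Pstar : ∀ ℓ, Matrix (Fin (n ℓ)) ((s : Fin t) × Fin (κ ℓ s)) ℂ)
    (horth : ∀ ℓ, (Pstar ℓ)ᴴ * Pstar ℓ = 1)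
    (hmax : ∀ P : ∀ ℓ, Matrix (Fin (n ℓ)) ((s : Fin t) × Fin (κ ℓ s)) ℂ,
      (∀ ℓ, (P ℓ)ᴴ * P ℓ = 1) → fObj B P ≤ fObj B Pstar) :
    ∀ ℓ : Fin m,
      scrH B Pstar ℓ = Pstar ℓ * ((Pstar ℓ)ᴴ * scrH B Pstar ℓ) ∧
      ((Pstar ℓ)ᴴ * scrH B Pstar ℓ).PosSemidef := by
  intro ℓ
  apply polar_of_opt (scrH B Pstar ℓ) (Pstar ℓ) (horth ℓ)
  intro U hU
  classical
  set Pnew := Function.update Pstar ℓ U with hPnew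
  have hPneworth : ∀ ℓ', (Pnew ℓ')ᴴ * Pnew ℓ' = 1 := by
    intro ℓ'
    by_cases h : ℓ' = ℓ
    · subst h; rw [hPnew, Function.update_self]; exact hU
    · rw [hPnew, Function.update_of_ne h]; exact horth ℓ'
  have hf : fObj B Pnew ≤ fObj B Pstar := hmax Pnew hPneworth
  have retwo : ∀ (S : ℂ), ((2:ℂ) * S).re = 2 * S.re := by
    intro S; simp [Complex.mul_re]
  have hUtr : (Uᴴ * scrH B Pstar ℓ).trace.re
      = 2 * ∑ sc : (s : Fin t) × Fin (κ ℓ s),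
          (star (fun a => U a sc) ⬝ᵥ (Hmat B Pstar ℓ sc.1 *ᵥ fun a => Pstar ℓ a sc)).re := by
    rw [trace_scrH, retwo, Complex.re_sum]
  have hQtr : ((Pstar ℓ)ᴴ * scrH B Pstar ℓ).trace.re
      = 2 * ∑ sc : (s : Fin t) × Fin (κ ℓ s),
          (star (fun a => Pstar ℓ a sc) ⬝ᵥ (Hmat B Pstar ℓ sc.1 *ᵥ fun a => Pstar ℓ a sc)).re := by
    rw [trace_scrH, retwo, Complex.re_sum]
  have hfstar : fObj B Pstar = ∑ sc : (s : Fin t) × Fin (κ ℓ s),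
      (star (fun a => Pstar ℓ a sc) ⬝ᵥ (Hmat B Pstar ℓ sc.1 *ᵥ fun a => Pstar ℓ a sc)).re :=
    fObj_eq B Pstar ℓ
  have hfnew : fObj B Pnew = ∑ sc : (s : Fin t) × Fin (κ ℓ s),
      (star (fun a => U a sc) ⬝ᵥ (Hmat B Pstar ℓ sc.1 *ᵥ fun a => U a sc)).re := by
    rw [fObj_eq B Pnew ℓ]
    refine Finset.sum_congr rfl fun sc _ => ?_
    rw [hPnew, Hmat_update]
    simp only [Function.update_self]
  have hsum : 2 * ∑ sc : (s : Fin t) × Fin (κ ℓ s),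
        (star (fun a => U a sc) ⬝ᵥ (Hmat B Pstar ℓ sc.1 *ᵥ fun a => Pstar ℓ a sc)).re
      ≤ (∑ sc : (s : Fin t) × Fin (κ ℓ s),
          (star (fun a => U a sc) ⬝ᵥ (Hmat B Pstar ℓ sc.1 *ᵥ fun a => U a sc)).re)
        + ∑ sc : (s : Fin t) × Fin (κ ℓ s),
          (star (fun a => Pstar ℓ a sc) ⬝ᵥ (Hmat B Pstar ℓ sc.1 *ᵥ fun a => Pstar ℓ a sc)).re := by
    rw [Finset.mul_sum, ← Finset.sum_add_distrib]
    exact Finset.sum_le_sum fun sc _ => cross_bound B Pstar ℓ sc.1 _ _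
  rw [hUtr, hQtr]
  rw [← hfstar] at hsum ⊢
  rw [← hfnew] at hsum
  linarith
end
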